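/- Let Γ be a countably infinite group and let F ⊂ Γ be a nonempty finite symmetric set with 1 ∉ F. If ℓ ≥ |F| + 1, then there exists a continuous Γ-equivariant map π : Free(3^Γ) → Col(F, ℓ) such that Stab(π) = {1}. -/

import Mathlib

open scoped Pointwise
section ShiftDefs

variable {Γ : Type} [Group Γ] {A B : Type*}

/-- The Bernoulli shift action of `Γ`: `(γ · x)(δ) = x(δγ)`. -/
def shiftAct (γ : Γ) (x : Γ → A) : Γ → A := fun δ => x (δ * γ)

/-- The free part of the shift `Γ ↷ (Γ → A)`. -/
def freePart (Γ : Type) [Group Γ] (A : Type*) : Set (Γ → A) :=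
  {x | ∀ γ : Γ, shiftAct γ x = x → γ = 1}

/-- A subshift: a closed shift-invariant subset. -/
def IsSubshift [TopologicalSpace A] (S : Set (Γ → A)) : Prop :=
  IsClosed S ∧ ∀ γ : Γ, ∀ x ∈ S, shiftAct γ x ∈ S

/-- A subshift of finite type: `⋂ γ (γ · C)` for some clopen `C`. -/
def IsSFT [TopologicalSpace A] (S : Set (Γ → A)) : Prop :=
  ∃ C : Set (Γ → A), IsClopen C ∧ S = ⋂ γ : Γ, shiftAct γ ⁻¹' C

/-- The stabilizer of a point under the shift action. -/
def ptStab (x : Γ → A) : Set Γ := {γ | shiftAct γ x = x}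

/-- `Stab(π)`: elements fixing every point in the image of `π` (domain `dom`). -/
def mapStab (π : (Γ → A) → (Γ → B)) (dom : Set (Γ → A)) : Set Γ :=
  {γ | ∀ x ∈ dom, shiftAct γ (π x) = π x}

/-- `Γ`-equivariance of `π` on the set `dom`. -/
def EquivariantOn (π : (Γ → A) → (Γ → B)) (dom : Set (Γ → A)) : Prop :=
  ∀ x ∈ dom, ∀ γ : Γ, π (shiftAct γ x) = shiftAct γ (π x)

/-- `Col(F, ℓ)`: proper `ℓ`-colorings of the Cayley graph `G(Γ, F)`. -/
def properCol (F : Finset Γ) (ℓ : ℕ) : Set (Γ → Fin ℓ) :=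
  {x | ∀ γ : Γ, ∀ σ ∈ F, x γ ≠ x (σ * γ)}

end ShiftDefs

set_option linter.unusedSectionVars false
set_option linter.unusedVariables false

namespace Stmt6Aux

variable {Γ : Type} [Group Γ] {A : Type*}

theorem shiftAct_shiftAct (a b : Γ) (x : Γ → A) :
    shiftAct a (shiftAct b x) = shiftAct (a * b) x := by
  funext δ; simp [shiftAct, mul_assoc]

theorem shiftAct_one (x : Γ → A) : shiftAct (1 : Γ) x = x := by
  funext δ; simp [shiftAct]

theorem shift_mem_freePart {x : Γ → A} (hx : x ∈ freePart Γ A) (δ : Γ) :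
    shiftAct δ x ∈ freePart Γ A := by
  intro γ hγ
  rw [shiftAct_shiftAct] at hγ
  have h2 : shiftAct (δ⁻¹ * (γ * δ)) x = x := by
    rw [← shiftAct_shiftAct, hγ, shiftAct_shiftAct, inv_mul_cancel, shiftAct_one]
  have := hx _ h2
  have h4 : γ * δ = 1 * δ := by
    have h3 : δ * (δ⁻¹ * (γ * δ)) = δ * 1 := by rw [this]
    simpa [mul_assoc] using h3
  exact mul_right_cancel h4


section Enum
variable (Γ)
variable [Countable Γ] [Infinite Γ]

noncomputable def enum : ℕ → Γ := (exists_surjective_nat Γ).choose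

theorem enum_surj : Function.Surjective (enum Γ) := (exists_surjective_nat Γ).choose_spec

end Enum

variable [Countable Γ] [Infinite Γ] [DecidableEq Γ]

open Classical in
noncomputable def dd (x : Γ → Fin 3) (σ : Γ) : ℕ :=
  if h : ∃ k, x (enum Γ k * σ) ≠ x (enum Γ k) then Nat.find h else 0

theorem dd_exists {x : Γ → Fin 3} (hx : x ∈ freePart Γ (Fin 3)) {σ : Γ} (hσ : σ ≠ 1) :
    ∃ k, x (enum Γ k * σ) ≠ x (enum Γ k) := by
  by_contra h
  push_neg at h
  apply hσ
  apply hx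
  funext δ
  obtain ⟨k, rfl⟩ := enum_surj Γ δ
  exact h k

open Classical in
theorem dd_spec {x : Γ → Fin 3} (hx : x ∈ freePart Γ (Fin 3)) {σ : Γ} (hσ : σ ≠ 1) :
    x (enum Γ (dd x σ) * σ) ≠ x (enum Γ (dd x σ)) := by
  have h := dd_exists hx hσ
  rw [dd, dif_pos h]
  exact Nat.find_spec h

open Classical in
theorem dd_min {x : Γ → Fin 3} (hx : x ∈ freePart Γ (Fin 3)) {σ : Γ} (hσ : σ ≠ 1)
    {k : ℕ} (hk : k < dd x σ) : x (enum Γ k * σ) = x (enum Γ k) := by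
  have h := dd_exists hx hσ
  rw [dd, dif_pos h] at hk
  by_contra hne
  exact Nat.find_min h hk hne

variable (F : Finset Γ)

noncomputable def rr (x : Γ → Fin 3) : ℕ := F.sup (dd x) + 1

noncomputable def ff (x : Γ → Fin 3) : ℕ :=
  Nat.pair (rr F x) (Encodable.encode (List.ofFn (fun k : Fin (rr F x) => x (enum Γ k))))

theorem dd_lt_rr {x : Γ → Fin 3} {σ : Γ} (hσ : σ ∈ F) : dd x σ < rr F x :=
  Nat.lt_succ_of_le (Finset.le_sup hσ)

theorem ff_shift_ne {x : Γ → Fin 3} (hx : x ∈ freePart Γ (Fin 3)) {σ : Γ}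
    (hσ : σ ∈ F) (hσ1 : σ ≠ 1) : ff F (shiftAct σ x) ≠ ff F x := by
  intro heq
  rw [ff, ff] at heq
  rw [Nat.pair_eq_pair] at heq
  obtain ⟨h1, h2⟩ := heq
  have h3 := Encodable.encode_injective h2
  -- lists of possibly different declared lengths; use h1 to align
  have hfn : ∀ k : Fin (rr F x), (shiftAct σ x) (enum Γ k) = x (enum Γ k) := by
    intro k
    have := congrArg (fun l : List (Fin 3) => l.length) h3
    -- easier: convert via h1
    have h4 : List.ofFn (fun k : Fin (rr F x) => (shiftAct σ x) (enum Γ k))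
        = List.ofFn (fun k : Fin (rr F x) => x (enum Γ k)) := by
      have := h3
      rw [show rr F (shiftAct σ x) = rr F x from h1] at this
      exact this
    have h5 := List.ofFn_injective h4
    exact congrFun h5 k
  have hk : dd x σ < rr F x := dd_lt_rr F hσ
  have := hfn ⟨dd x σ, hk⟩
  simp only [shiftAct] at this
  exact dd_spec hx hσ1 this

noncomputable def prio (x : Γ → Fin 3) : ℕ × ℕ := ((x 1 : Fin 3).val, ff F x)

noncomputable def Rlt (y x : Γ → Fin 3) : Prop :=
  Prod.Lex (· < ·) (· < ·) (prio F y) (prio F x)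

theorem Rwf : WellFounded (Rlt F) :=
  InvImage.wf (prio F) (WellFounded.prod_lex wellFounded_lt wellFounded_lt)

theorem prio_shift_ne {x : Γ → Fin 3} (hx : x ∈ freePart Γ (Fin 3)) {σ : Γ}
    (hσ : σ ∈ F) (hσ1 : σ ≠ 1) : prio F (shiftAct σ x) ≠ prio F x := by
  intro h
  exact ff_shift_ne F hx hσ hσ1 (congrArg Prod.snd h)

theorem Rlt_total {y x : Γ → Fin 3} (h : prio F y ≠ prio F x) :
    Rlt F y x ∨ Rlt F x y := by
  rcases lt_trichotomy (prio F y).1 (prio F x).1 with h1 | h1 | h1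
  · exact Or.inl (Prod.lex_iff.2 (Or.inl h1))
  · rcases lt_trichotomy (prio F y).2 (prio F x).2 with h2 | h2 | h2
    · exact Or.inl (Prod.lex_iff.2 (Or.inr ⟨h1, h2⟩))
    · exact absurd (Prod.ext h1 h2) h
    · exact Or.inr (Prod.lex_iff.2 (Or.inr ⟨h1.symm, h2⟩))
  · exact Or.inr (Prod.lex_iff.2 (Or.inl h1))


noncomputable def kap (t₂ t₃ t₄ : Γ) (x : Γ → Fin 3) : ℕ :=
  (x 1).val + (x t₂).val + (x t₃).val + (x t₄).val

variable {ℓ : ℕ}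

noncomputable def pickFrom (hpos : 0 < ℓ) (k : ℕ) (A : Finset (Fin ℓ)) : Fin ℓ :=
  if h : A.Nonempty then
    (A.sort (· ≤ ·)).get ⟨k % A.card, by
      rw [Finset.length_sort]; exact Nat.mod_lt _ (Finset.card_pos.2 h)⟩
  else ⟨0, hpos⟩

theorem pickFrom_mem (hpos : 0 < ℓ) (k : ℕ) {A : Finset (Fin ℓ)} (h : A.Nonempty) :
    pickFrom hpos k A ∈ A := by
  rw [pickFrom, dif_pos h]
  exact (Finset.mem_sort _).1 (List.get_mem _ _)

theorem pickFrom_univ (hpos : 0 < ℓ) (k : ℕ) :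
    pickFrom hpos k (Finset.univ : Finset (Fin ℓ)) = ⟨k % ℓ, Nat.mod_lt _ hpos⟩ := by
  have hne : (Finset.univ : Finset (Fin ℓ)).Nonempty := ⟨⟨0, hpos⟩, Finset.mem_univ _⟩
  rw [pickFrom, dif_pos hne]
  have hcard : (Finset.univ : Finset (Fin ℓ)).card = ℓ := by simp
  have hsort : (Finset.univ : Finset (Fin ℓ)).sort (· ≤ ·) = List.finRange ℓ :=
    Fin.sort_univ ℓ
  -- rewrite the get
  apply Fin.ext
  have : ∀ (l : List (Fin ℓ)) (hl : l = List.finRange ℓ) (i : ℕ) (hi : i < l.length),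
      l.get ⟨i, hi⟩ = ⟨i, by simpa [hl] using hi⟩ := by
    intro l hl i hi
    subst hl
    exact List.get_finRange _
  rw [this _ hsort _ (by rw [Finset.length_sort, hcard]; exact Nat.mod_lt _ hpos)]
  simp [hcard]

open Classical in
noncomputable def LowerSet (x : Γ → Fin 3) : Finset Γ :=
  F.filter (fun σ => Rlt F (shiftAct σ x) x)

theorem mem_LowerSet {x : Γ → Fin 3} {σ : Γ} :
    σ ∈ LowerSet F x ↔ σ ∈ F ∧ Rlt F (shiftAct σ x) x := by
  classical
  simp [LowerSet]

open Classical in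
noncomputable def gg (hpos : 0 < ℓ) (t₂ t₃ t₄ : Γ) : (Γ → Fin 3) → Fin ℓ :=
  (Rwf F).fix (fun x rec =>
    pickFrom hpos (kap t₂ t₃ t₄ x)
      (Finset.univ \ (LowerSet F x).attach.image
        (fun σ => rec (shiftAct σ.1 x) ((mem_LowerSet F).1 σ.2).2)))

open Classical in
noncomputable def usedSet (hpos : 0 < ℓ) (t₂ t₃ t₄ : Γ) (x : Γ → Fin 3) : Finset (Fin ℓ) :=
  (LowerSet F x).image (fun σ => gg F hpos t₂ t₃ t₄ (shiftAct σ x))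

theorem gg_eq_pick (hpos : 0 < ℓ) (t₂ t₃ t₄ : Γ) (x : Γ → Fin 3) :
    gg F hpos t₂ t₃ t₄ x
      = pickFrom hpos (kap t₂ t₃ t₄ x) (Finset.univ \ usedSet F hpos t₂ t₃ t₄ x) := by
  classical
  rw [gg, WellFounded.fix_eq]
  congr 1
  rw [usedSet]
  ext c
  simp [gg]


/-- At a strict local minimum (first priority key `0`, all neighbors nonzero),
the color is `κ mod ℓ`. -/
theorem gg_min (hpos : 0 < ℓ) (t₂ t₃ t₄ : Γ) {x : Γ → Fin 3}
    (h0 : x 1 = 0) (hnb : ∀ σ ∈ F, x σ ≠ 0) :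
    gg F hpos t₂ t₃ t₄ x = ⟨kap t₂ t₃ t₄ x % ℓ, Nat.mod_lt _ hpos⟩ := by
  have hempty : LowerSet F x = ∅ := by
    rw [Finset.eq_empty_iff_forall_notMem]
    intro σ hσ
    obtain ⟨hσF, hR⟩ := (mem_LowerSet F).1 hσ
    rcases Prod.lex_iff.1 hR with h | h
    · have : (x σ).val < (x 1).val := by
        simpa [prio, shiftAct, one_mul] using h
      rw [h0] at this
      exact absurd this (by simp)
    · have : (x σ).val = (x 1).val := by
        simpa [prio, shiftAct, one_mul] using h.1
      rw [h0] at this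
      exact hnb σ hσF (Fin.ext (by simpa using this))
  have hused : usedSet F hpos t₂ t₃ t₄ x = ∅ := by
    rw [usedSet, hempty, Finset.image_empty]
  rw [gg_eq_pick, hused, Finset.sdiff_empty, pickFrom_univ]

theorem gg_proper (hpos : 0 < ℓ) (hcard : F.card < ℓ) (hF1 : (1 : Γ) ∉ F)
    (hFsym : ∀ σ ∈ F, σ⁻¹ ∈ F) (t₂ t₃ t₄ : Γ)
    {x : Γ → Fin 3} (hx : x ∈ freePart Γ (Fin 3)) {σ : Γ} (hσ : σ ∈ F) :
    gg F hpos t₂ t₃ t₄ (shiftAct σ x) ≠ gg F hpos t₂ t₃ t₄ x := by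
  have hσ1 : σ ≠ 1 := fun h => hF1 (h ▸ hσ)
  have havail : ∀ y : Γ → Fin 3,
      (Finset.univ \ usedSet F hpos t₂ t₃ t₄ y).Nonempty := by
    intro y
    rw [← Finset.card_pos, Finset.card_sdiff_of_subset (Finset.subset_univ _)]
    have h1 : (usedSet F hpos t₂ t₃ t₄ y).card ≤ F.card := by
      classical
      calc (usedSet F hpos t₂ t₃ t₄ y).card ≤ (LowerSet F y).card :=
            Finset.card_image_le
        _ ≤ F.card := Finset.card_filter_le _ _
    have h2 : (Finset.univ : Finset (Fin ℓ)).card = ℓ := by simp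
    omega
  rcases Rlt_total F (prio_shift_ne F hx hσ hσ1) with hR | hR
  · -- σ • x is lower: its color is excluded from pick at x
    have hmem : gg F hpos t₂ t₃ t₄ (shiftAct σ x) ∈ usedSet F hpos t₂ t₃ t₄ x := by
      rw [usedSet]
      exact Finset.mem_image_of_mem _ ((mem_LowerSet F).2 ⟨hσ, hR⟩)
    have hpick := pickFrom_mem hpos (kap t₂ t₃ t₄ x) (havail x)
    rw [← gg_eq_pick] at hpick
    intro heq
    rw [heq] at hmem
    exact (Finset.mem_sdiff.1 hpick).2 hmem
  · -- x is lower than σ • x : x = σ⁻¹ • (σ • x)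
    have hxeq : shiftAct σ⁻¹ (shiftAct σ x) = x := by
      rw [shiftAct_shiftAct, inv_mul_cancel, shiftAct_one]
    have hR' : Rlt F (shiftAct σ⁻¹ (shiftAct σ x)) (shiftAct σ x) := by
      rw [hxeq]; exact hR
    have hmem : gg F hpos t₂ t₃ t₄ x ∈ usedSet F hpos t₂ t₃ t₄ (shiftAct σ x) := by
      rw [usedSet]
      have := Finset.mem_image_of_mem
        (fun τ => gg F hpos t₂ t₃ t₄ (shiftAct τ (shiftAct σ x)))
        ((mem_LowerSet F).2 ⟨hFsym σ hσ, hR'⟩)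
      rwa [hxeq] at this
    have hpick := pickFrom_mem hpos (kap t₂ t₃ t₄ (shiftAct σ x)) (havail (shiftAct σ x))
    rw [← gg_eq_pick] at hpick
    intro heq
    rw [← heq] at hmem
    exact (Finset.mem_sdiff.1 hpick).2 hmem


noncomputable def Vff (x : Γ → Fin 3) : Finset Γ :=
  (F.biUnion fun σ =>
      ((Finset.range (dd x σ + 1)).image (enum Γ)) ∪
      ((Finset.range (dd x σ + 1)).image (fun k => enum Γ k * σ)))
    ∪ (Finset.range (rr F x)).image (enum Γ)

theorem win_dd {x y : Γ → Fin 3} (hx : x ∈ freePart Γ (Fin 3))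
    (hy : y ∈ freePart Γ (Fin 3)) {σ : Γ} (hσ : σ ∈ F) (hσ1 : σ ≠ 1)
    (hagree : ∀ a ∈ Vff F x, y a = x a) : dd y σ = dd x σ := by
  have hA : ∀ k ≤ dd x σ, y (enum Γ k) = x (enum Γ k) := by
    intro k hk
    apply hagree
    rw [Vff]
    apply Finset.mem_union_left
    exact Finset.mem_biUnion.2 ⟨σ, hσ, Finset.mem_union_left _
      (Finset.mem_image.2 ⟨k, Finset.mem_range.2 (Nat.lt_succ_of_le hk), rfl⟩)⟩
  have hB : ∀ k ≤ dd x σ, y (enum Γ k * σ) = x (enum Γ k * σ) := by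
    intro k hk
    apply hagree
    rw [Vff]
    apply Finset.mem_union_left
    exact Finset.mem_biUnion.2 ⟨σ, hσ, Finset.mem_union_right _
      (Finset.mem_image.2 ⟨k, Finset.mem_range.2 (Nat.lt_succ_of_le hk), rfl⟩)⟩
  have hey := dd_exists hy hσ1
  rw [dd, dif_pos hey, Nat.find_eq_iff]
  constructor
  · rw [hA _ le_rfl, hB _ le_rfl]
    exact dd_spec hx hσ1
  · intro k hk hne
    rw [hA _ (le_of_lt hk), hB _ (le_of_lt hk)] at hne
    exact hne (dd_min hx hσ1 hk)

theorem win_rr {x y : Γ → Fin 3} (hx : x ∈ freePart Γ (Fin 3))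
    (hy : y ∈ freePart Γ (Fin 3)) (hF1 : (1 : Γ) ∉ F)
    (hagree : ∀ a ∈ Vff F x, y a = x a) : rr F y = rr F x := by
  rw [rr, rr]
  congr 1
  apply Finset.sup_congr rfl
  intro σ hσ
  exact win_dd F hx hy hσ (fun h => hF1 (h ▸ hσ)) hagree

theorem win_ff {x y : Γ → Fin 3} (hx : x ∈ freePart Γ (Fin 3))
    (hy : y ∈ freePart Γ (Fin 3)) (hF1 : (1 : Γ) ∉ F)
    (hagree : ∀ a ∈ Vff F x, y a = x a) : ff F y = ff F x := by
  have hrr := win_rr F hx hy hF1 hagree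
  rw [ff, ff, hrr]
  congr 2
  apply congrArg
  funext k
  apply hagree
  rw [Vff]
  apply Finset.mem_union_right
  exact Finset.mem_image.2 ⟨(k : ℕ), Finset.mem_range.2 k.2, rfl⟩

theorem win_prio {x y : Γ → Fin 3} (hx : x ∈ freePart Γ (Fin 3))
    (hy : y ∈ freePart Γ (Fin 3)) (hF1 : (1 : Γ) ∉ F)
    (hagree : ∀ a ∈ Vff F x ∪ {1}, y a = x a) : prio F y = prio F x := by
  rw [prio, prio]
  have h1 : y 1 = x 1 := hagree 1 (Finset.mem_union_right _ (Finset.mem_singleton_self 1))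
  rw [h1, win_ff F hx hy hF1 (fun a ha => hagree a (Finset.mem_union_left _ ha))]

theorem gg_local (hpos : 0 < ℓ) (hF1 : (1 : Γ) ∉ F) (t₂ t₃ t₄ : Γ) :
    ∀ x ∈ freePart Γ (Fin 3), ∃ V : Finset Γ,
      ∀ y ∈ freePart Γ (Fin 3), (∀ a ∈ V, y a = x a) →
        gg F hpos t₂ t₃ t₄ y = gg F hpos t₂ t₃ t₄ x := by
  classical
  intro x
  refine (Rwf F).induction
    (C := fun x => x ∈ freePart Γ (Fin 3) → ∃ V : Finset Γ,
      ∀ y ∈ freePart Γ (Fin 3), (∀ a ∈ V, y a = x a) →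
        gg F hpos t₂ t₃ t₄ y = gg F hpos t₂ t₃ t₄ x) x ?_
  intro x IH hx
  have hch : ∀ σ : Γ, ∃ Wσ : Finset Γ, σ ∈ LowerSet F x →
      ∀ y ∈ freePart Γ (Fin 3), (∀ a ∈ Wσ, y a = shiftAct σ x a) →
        gg F hpos t₂ t₃ t₄ y = gg F hpos t₂ t₃ t₄ (shiftAct σ x) := by
    intro σ
    by_cases hσ : σ ∈ LowerSet F x
    · obtain ⟨Wσ, hWσ⟩ := IH (shiftAct σ x) ((mem_LowerSet F).1 hσ).2 (shift_mem_freePart hx σ)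
      exact ⟨Wσ, fun _ => hWσ⟩
    · exact ⟨∅, fun h => absurd h hσ⟩
  choose W hW using hch
  refine ⟨((Vff F x ∪ {1})
      ∪ F.biUnion (fun σ => (Vff F (shiftAct σ x) ∪ {1}).image (fun a => a * σ)))
      ∪ (({1, t₂, t₃, t₄} : Finset Γ)
      ∪ (LowerSet F x).biUnion (fun σ => (W σ).image (fun a => a * σ))), ?_⟩
  intro y hy hagree
  have hag1 : ∀ a ∈ Vff F x ∪ {1}, y a = x a := by
    intro a ha
    exact hagree a (Finset.mem_union_left _ (Finset.mem_union_left _ ha))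
  have h1 : prio F y = prio F x := win_prio F hx hy hF1 hag1
  have h2 : ∀ σ ∈ F, prio F (shiftAct σ y) = prio F (shiftAct σ x) := by
    intro σ hσ
    apply win_prio F (shift_mem_freePart hx σ) (shift_mem_freePart hy σ) hF1
    intro a ha
    show y (a * σ) = x (a * σ)
    apply hagree
    apply Finset.mem_union_left
    apply Finset.mem_union_right
    exact Finset.mem_biUnion.2 ⟨σ, hσ, Finset.mem_image.2 ⟨a, ha, rfl⟩⟩
  have h3 : LowerSet F y = LowerSet F x := by
    ext σ
    rw [mem_LowerSet, mem_LowerSet]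
    constructor
    · rintro ⟨hσF, hR⟩
      refine ⟨hσF, ?_⟩
      rw [Rlt] at hR ⊢
      rwa [h2 σ hσF, h1] at hR
    · rintro ⟨hσF, hR⟩
      refine ⟨hσF, ?_⟩
      rw [Rlt] at hR ⊢
      rwa [h2 σ hσF, h1]
  have h4 : usedSet F hpos t₂ t₃ t₄ y = usedSet F hpos t₂ t₃ t₄ x := by
    rw [usedSet, usedSet, h3]
    apply Finset.image_congr
    intro σ hσ
    apply hW σ hσ (shiftAct σ y) (shift_mem_freePart hy σ)
    intro a ha
    show y (a * σ) = x (a * σ)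
    apply hagree
    apply Finset.mem_union_right
    apply Finset.mem_union_right
    exact Finset.mem_biUnion.2 ⟨σ, hσ, Finset.mem_image.2 ⟨a, ha, rfl⟩⟩
  have h5 : kap t₂ t₃ t₄ y = kap t₂ t₃ t₄ x := by
    have hmem : ∀ a ∈ ({1, t₂, t₃, t₄} : Finset Γ), y a = x a := by
      intro a ha
      exact hagree a (Finset.mem_union_right _ (Finset.mem_union_left _ ha))
    rw [kap, kap, hmem 1 (by simp), hmem t₂ (by simp), hmem t₃ (by simp),
      hmem t₄ (by simp)]
  rw [gg_eq_pick, gg_eq_pick, h4, h5]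


/-! ### Extension of a finite prescription to a free point -/

noncomputable def extStep (n : ℕ) (Sf : Finset Γ × (Γ → Fin 3)) : Finset Γ × (Γ → Fin 3) :=
  if enum Γ n = 1 then Sf
  else
    let δ := (Infinite.exists_notMem_finset
      (Sf.1 ∪ Sf.1.image (fun a => a * (enum Γ n)⁻¹))).choose
    (Sf.1 ∪ {δ, δ * enum Γ n},
      Function.update (Function.update Sf.2 δ 0) (δ * enum Γ n) 1)

theorem extStep_subset (n : ℕ) (Sf : Finset Γ × (Γ → Fin 3)) :
    Sf.1 ⊆ (extStep n Sf).1 := by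
  rw [extStep]
  split
  · exact Finset.Subset.refl _
  · exact Finset.subset_union_left

theorem extStep_stable (n : ℕ) (Sf : Finset Γ × (Γ → Fin 3)) {a : Γ}
    (ha : a ∈ Sf.1) : (extStep n Sf).2 a = Sf.2 a := by
  rw [extStep]
  split
  · rfl
  · rename_i hn
    set δ := (Infinite.exists_notMem_finset
      (Sf.1 ∪ Sf.1.image (fun a => a * (enum Γ n)⁻¹))).choose with hδdef
    have hspec := (Infinite.exists_notMem_finset
      (Sf.1 ∪ Sf.1.image (fun a => a * (enum Γ n)⁻¹))).choose_spec
    rw [← hδdef] at hspec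
    have hδ : δ ∉ Sf.1 := fun h => hspec (Finset.mem_union_left _ h)
    have hδγ : δ * enum Γ n ∉ Sf.1 := by
      intro h
      exact hspec (Finset.mem_union_right _ (Finset.mem_image.2
        ⟨δ * enum Γ n, h, by group⟩))
    show (Function.update (Function.update Sf.2 δ 0) (δ * enum Γ n) 1) a = Sf.2 a
    have ha1 : a ≠ δ * enum Γ n := fun h => hδγ (h ▸ ha)
    have ha2 : a ≠ δ := fun h => hδ (h ▸ ha)
    rw [Function.update_of_ne ha1, Function.update_of_ne ha2]

theorem extStep_witness (n : ℕ) (Sf : Finset Γ × (Γ → Fin 3)) (hn : enum Γ n ≠ 1) :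
    ∃ δ : Γ, δ ∈ (extStep n Sf).1 ∧ δ * enum Γ n ∈ (extStep n Sf).1 ∧
      (extStep n Sf).2 δ = 0 ∧ (extStep n Sf).2 (δ * enum Γ n) = 1 := by
  rw [extStep, if_neg hn]
  set δ := (Infinite.exists_notMem_finset
    (Sf.1 ∪ Sf.1.image (fun a => a * (enum Γ n)⁻¹))).choose with hδdef
  refine ⟨δ, ?_, ?_, ?_, ?_⟩
  · exact Finset.mem_union_right _ (by simp)
  · exact Finset.mem_union_right _ (by simp)
  · show (Function.update (Function.update Sf.2 δ 0) (δ * enum Γ n) 1) δ = 0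
    have hne : δ ≠ δ * enum Γ n := by
      intro h
      apply hn
      have h2 : δ * 1 = δ * enum Γ n := by rw [mul_one]; exact h
      exact (mul_left_cancel h2).symm
    rw [Function.update_of_ne hne, Function.update_self]
  · show (Function.update (Function.update Sf.2 δ 0) (δ * enum Γ n) 1) (δ * enum Γ n) = 1
    rw [Function.update_self]

noncomputable def extSeq (D : Finset Γ) (p : Γ → Fin 3) : ℕ → Finset Γ × (Γ → Fin 3)
  | 0 => (D, p)
  | n + 1 => extStep n (extSeq D p n)

theorem extSeq_subset_ge (D : Finset Γ) (p : Γ → Fin 3) {n m : ℕ} (h : n ≤ m) :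
    (extSeq D p n).1 ⊆ (extSeq D p m).1 := by
  induction m, h using Nat.le_induction with
  | base => exact Finset.Subset.refl _
  | succ m hm ih => exact ih.trans (extStep_subset m _)

theorem extSeq_stable_ge (D : Finset Γ) (p : Γ → Fin 3) {n m : ℕ} (h : n ≤ m)
    {a : Γ} (ha : a ∈ (extSeq D p n).1) :
    (extSeq D p m).2 a = (extSeq D p n).2 a := by
  induction m, h using Nat.le_induction with
  | base => rfl
  | succ m hm ih =>
    rw [show extSeq D p (m+1) = extStep m (extSeq D p m) from rfl,
      extStep_stable m _ (extSeq_subset_ge D p hm ha), ih]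

open Classical in
noncomputable def extLimit (D : Finset Γ) (p : Γ → Fin 3) : Γ → Fin 3 := fun a =>
  if h : ∃ n, a ∈ (extSeq D p n).1 then (extSeq D p (Nat.find h)).2 a else 0

theorem extLimit_eq (D : Finset Γ) (p : Γ → Fin 3) {n : ℕ} {a : Γ}
    (ha : a ∈ (extSeq D p n).1) : extLimit D p a = (extSeq D p n).2 a := by
  classical
  have h : ∃ m, a ∈ (extSeq D p m).1 := ⟨n, ha⟩
  rw [extLimit]
  rw [dif_pos h]
  have h1 : Nat.find h ≤ n := Nat.find_min' h ha
  rw [extSeq_stable_ge D p h1 (Nat.find_spec h)]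

theorem extLimit_spec (D : Finset Γ) (p : Γ → Fin 3) {a : Γ} (ha : a ∈ D) :
    extLimit D p a = p a :=
  extLimit_eq D p (n := 0) ha

theorem extLimit_free (D : Finset Γ) (p : Γ → Fin 3) :
    extLimit D p ∈ freePart Γ (Fin 3) := by
  intro γ heq
  by_contra hγ
  obtain ⟨n, hn⟩ := enum_surj Γ γ
  obtain ⟨δ, hδ1, hδ2, hv1, hv2⟩ := extStep_witness n (extSeq D p n) (by rw [hn]; exact hγ)
  have e1 : extLimit D p δ = 0 := by
    rw [extLimit_eq D p (n := n+1) hδ1]; exact hv1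
  have e2 : extLimit D p (δ * γ) = 1 := by
    rw [← hn]
    rw [extLimit_eq D p (n := n+1) hδ2]; exact hv2
  have := congrFun heq δ
  rw [shiftAct] at this
  rw [e1, e2] at this
  exact absurd this (by decide)


/-! ### The separation lemma: the window `{1,t₂,t₃,t₄}` is never (right-)`γ`-invariant
modulo `{1,γ}`. -/

theorem exists_sep {t₂ t₃ t₄ γ : Γ} (hγ : γ ≠ 1)
    (h2 : t₂ ≠ 1) (h3 : t₃ ≠ 1) (h4 : t₄ ≠ 1)
    (h23 : t₂ ≠ t₃) (h24 : t₂ ≠ t₄) (h34 : t₃ ≠ t₄)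
    (hA1 : t₄ ≠ t₃ * t₂⁻¹ * t₃) (hA2 : t₄ ≠ t₂ * t₃⁻¹ * t₂)
    (hB2 : t₄ ≠ t₂ * t₂) (hB3 : t₄ ≠ t₃ * t₂) (hB4 : t₄ ≠ t₂ * t₃)
    (hB5 : t₄ ≠ t₃ * t₃) (hB6 : t₄ ≠ t₂⁻¹ * t₃) (hB8 : t₄ ≠ t₃⁻¹ * t₂) :
    ∃ w : Γ, w ≠ 1 ∧ w ≠ γ ∧
      ¬((w = 1 ∨ w = t₂ ∨ w = t₃ ∨ w = t₄) ↔
        (w = γ ∨ w = t₂ * γ ∨ w = t₃ * γ ∨ w = t₄ * γ)) := by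
  by_contra hcon
  push_neg at hcon
  -- hcon : ∀ w, w ≠ 1 → w ≠ γ → (inT ↔ inTγ)
  have self_mul : ∀ s : Γ, s = s * γ → False := by
    intro s hs
    apply hγ
    have : s * 1 = s * γ := by rw [mul_one]; exact hs
    exact (mul_left_cancel this).symm
  by_cases hγ2 : γ = t₂
  · -- γ = t₂ : use the fact for w = t₄
    have f4 := (hcon t₄ h4 (fun h => h24 (h.trans hγ2).symm)).mp (by tauto)
    rcases f4 with h | h | h | h
    · exact h24 (h.trans hγ2).symm
    · exact hB2 (by rw [h, hγ2])
    · exact hB3 (by rw [h, hγ2])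
    · exact self_mul t₄ h
  by_cases hγ3 : γ = t₃
  · have f4 := (hcon t₄ h4 (fun h => h34 (h.trans hγ3).symm)).mp (by tauto)
    rcases f4 with h | h | h | h
    · exact h34 (h.trans hγ3).symm
    · exact hB4 (by rw [h, hγ3])
    · exact hB5 (by rw [h, hγ3])
    · exact self_mul t₄ h
  by_cases hγ4 : γ = t₄
  · have f3 := (hcon t₃ h3 (fun h => h34 (h.trans hγ4))).mp (by tauto)
    rcases f3 with h | h | h | h
    · exact h34 (h.trans hγ4)
    · -- t₃ = t₂ * γ = t₂ * t₄ : t₄ = t₂⁻¹ t₃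
      apply hB6
      rw [hγ4] at h
      rw [h]; group
    · exact self_mul t₃ h
    · -- t₃ = t₄ * t₄ ; now use w = t₂
      have f2 := (hcon t₂ h2 (fun hh => h24 (hh.trans hγ4))).mp (by tauto)
      rcases f2 with h' | h' | h' | h'
      · exact h24 (h'.trans hγ4)
      · exact self_mul t₂ h'
      · -- t₂ = t₃ * γ = t₃ * t₄ : t₄ = t₃⁻¹ t₂
        apply hB8
        rw [hγ4] at h'
        rw [h']; group
      · -- t₂ = t₄ * γ = t₃
        exact h23 (h'.trans h.symm)
  -- main case : γ ∉ {1, t₂, t₃, t₄}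
  have f2 := (hcon t₂ h2 (fun h => hγ2 h.symm)).mp (by tauto)
  have f3 := (hcon t₃ h3 (fun h => hγ3 h.symm)).mp (by tauto)
  have hγ2' : ¬ (t₂ = γ) := fun h => hγ2 h.symm
  have hγ3' : ¬ (t₃ = γ) := fun h => hγ3 h.symm
  have f2' : t₂ = t₃ * γ ∨ t₂ = t₄ * γ := by
    rcases f2 with h | h | h | h
    · exact absurd h hγ2'
    · exact absurd h (fun hh => self_mul t₂ hh)
    · exact Or.inl h
    · exact Or.inr h
  have f3' : t₃ = t₂ * γ ∨ t₃ = t₄ * γ := by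
    rcases f3 with h | h | h | h
    · exact absurd h hγ3'
    · exact Or.inl h
    · exact absurd h (fun hh => self_mul t₃ hh)
    · exact Or.inr h
  rcases f2' with ha | hb
  · -- t₂ = t₃ * γ, so γ = t₃⁻¹ * t₂
    have hγval : γ = t₃⁻¹ * t₂ := by rw [ha]; group
    rcases f3' with ha1 | ha2
    · -- t₃ = t₂ * γ = t₂ * t₃⁻¹ * t₂... combined with ha : t₂ = t₃ γ:
      -- then t₃ = t₃ γ γ so γ² = 1 and also t₄'s fact needed; but simpler:
      -- from ha1 and hγval : t₃ = t₂ t₃⁻¹ t₂ -- no contradiction directly; use f4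
      have f4 := (hcon t₄ h4 (fun h => hγ4 h.symm)).mp (by tauto)
      rcases f4 with h | h | h | h
      · exact hγ4 h.symm
      · -- t₄ = t₂ * γ = t₃ (by ha1)
        exact h34 (by rw [← ha1] at h; exact h.symm)
      · -- t₄ = t₃ * γ = t₂ (by ha)
        exact h24 (by rw [← ha] at h; exact h.symm)
      · exact self_mul t₄ h
    · -- t₃ = t₄ * γ : t₄ = t₃ * γ⁻¹ = t₃ t₂⁻¹ t₃
      apply hA1
      have h5 : t₄ = t₃ * γ⁻¹ := by rw [ha2]; group
      rw [hγval] at h5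
      rw [h5]; group
  · -- t₂ = t₄ * γ
    rcases f3' with ha1 | ha2
    · -- t₃ = t₂ * γ : γ = t₂⁻¹ t₃ ; t₄ = t₂ γ⁻¹ = t₂ t₃⁻¹ t₂
      apply hA2
      have hγval : γ = t₂⁻¹ * t₃ := by rw [ha1]; group
      have h5 : t₄ = t₂ * γ⁻¹ := by rw [hb]; group
      rw [hγval] at h5
      rw [h5]; group
    · -- t₃ = t₄ * γ = t₂
      exact h23 (hb.trans ha2.symm)

/-! ### The two-minima configuration argument -/

theorem config_mod (hpos : 0 < ℓ) (t₂ t₃ t₄ : Γ) (hF1 : (1 : Γ) ∉ F)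
    (hFsym : ∀ σ ∈ F, σ⁻¹ ∈ F) {γ : Γ} (hγ : γ ≠ 1) (hγF : γ ∉ F) (w : Γ)
    (hkey : ∀ x ∈ freePart Γ (Fin 3),
      gg F hpos t₂ t₃ t₄ (shiftAct γ x) = gg F hpos t₂ t₃ t₄ x)
    (p : Γ → Fin 3) (hp1 : p 1 = 0) (hpγ : p γ = 0)
    (hpF : ∀ σ ∈ F, p σ ≠ 0) (hpFγ : ∀ σ ∈ F, p (σ * γ) ≠ 0) :
    ((p γ).val + (p (t₂ * γ)).val + (p (t₃ * γ)).val + (p (t₄ * γ)).val) % ℓ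
      = ((p 1).val + (p t₂).val + (p t₃).val + (p t₄).val) % ℓ := by
  classical
  set D : Finset Γ :=
    ({1, γ, t₂, t₃, t₄, t₂ * γ, t₃ * γ, t₄ * γ} : Finset Γ) ∪ F ∪ F.image (fun σ => σ * γ)
    with hD
  have hmemD : ∀ v : Γ, (v = 1 ∨ v = γ ∨ v = t₂ ∨ v = t₃ ∨ v = t₄ ∨
      v = t₂ * γ ∨ v = t₃ * γ ∨ v = t₄ * γ ∨ v ∈ F ∨ (∃ σ ∈ F, v = σ * γ)) → v ∈ D := by
    intro v hv
    rw [hD]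
    simp only [Finset.mem_union, Finset.mem_insert, Finset.mem_singleton, Finset.mem_image]
    rcases hv with h|h|h|h|h|h|h|h|h|⟨σ,hσ,h⟩
    · exact Or.inl (Or.inl (Or.inl h))
    · exact Or.inl (Or.inl (Or.inr (Or.inl h)))
    · exact Or.inl (Or.inl (Or.inr (Or.inr (Or.inl h))))
    · exact Or.inl (Or.inl (Or.inr (Or.inr (Or.inr (Or.inl h)))))
    · exact Or.inl (Or.inl (Or.inr (Or.inr (Or.inr (Or.inr (Or.inl h))))))
    · exact Or.inl (Or.inl (Or.inr (Or.inr (Or.inr (Or.inr (Or.inr (Or.inl h)))))))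
    · exact Or.inl (Or.inl (Or.inr (Or.inr (Or.inr (Or.inr (Or.inr (Or.inr (Or.inl h))))))))
    · exact Or.inl (Or.inl (Or.inr (Or.inr (Or.inr (Or.inr (Or.inr (Or.inr (Or.inr h))))))))
    · exact Or.inl (Or.inr h)
    · exact Or.inr ⟨σ, hσ, h.symm⟩
  set y : Γ → Fin 3 := extLimit D p with hy
  have hyfree := extLimit_free D p
  have hyval : ∀ a ∈ D, y a = p a := fun a ha => extLimit_spec D p ha
  have m1 : (1 : Γ) ∈ D := hmemD 1 (Or.inl rfl)
  have mγ : γ ∈ D := hmemD γ (Or.inr (Or.inl rfl))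
  have m2 : t₂ ∈ D := hmemD t₂ (Or.inr (Or.inr (Or.inl rfl)))
  have m3 : t₃ ∈ D := hmemD t₃ (Or.inr (Or.inr (Or.inr (Or.inl rfl))))
  have m4 : t₄ ∈ D := hmemD t₄ (Or.inr (Or.inr (Or.inr (Or.inr (Or.inl rfl)))))
  have m2γ : t₂ * γ ∈ D := hmemD _ (Or.inr (Or.inr (Or.inr (Or.inr (Or.inr (Or.inl rfl))))))
  have m3γ : t₃ * γ ∈ D :=
    hmemD _ (Or.inr (Or.inr (Or.inr (Or.inr (Or.inr (Or.inr (Or.inl rfl)))))))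
  have m4γ : t₄ * γ ∈ D :=
    hmemD _ (Or.inr (Or.inr (Or.inr (Or.inr (Or.inr (Or.inr (Or.inr (Or.inl rfl))))))))
  have e1 : gg F hpos t₂ t₃ t₄ y = ⟨kap t₂ t₃ t₄ y % ℓ, Nat.mod_lt _ hpos⟩ := by
    apply gg_min
    · rw [hyval 1 m1]; exact hp1
    · intro σ hσ
      have : σ ∈ D := hmemD σ (by exact Or.inr (Or.inr (Or.inr (Or.inr (Or.inr
        (Or.inr (Or.inr (Or.inr (Or.inl hσ)))))))))
      rw [hyval σ this]
      exact hpF σ hσ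
  have e2 : gg F hpos t₂ t₃ t₄ (shiftAct γ y)
      = ⟨kap t₂ t₃ t₄ (shiftAct γ y) % ℓ, Nat.mod_lt _ hpos⟩ := by
    apply gg_min
    · show y (1 * γ) = 0
      rw [one_mul, hyval γ mγ]
      exact hpγ
    · intro σ hσ
      show y (σ * γ) ≠ 0
      have : σ * γ ∈ D := hmemD (σ * γ) (by exact Or.inr (Or.inr (Or.inr (Or.inr (Or.inr
        (Or.inr (Or.inr (Or.inr (Or.inr ⟨σ, hσ, rfl⟩)))))))))
      rw [hyval (σ * γ) this]
      exact hpFγ σ hσ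
  have e3 := hkey y hyfree
  rw [e1, e2] at e3
  have e4 : kap t₂ t₃ t₄ (shiftAct γ y) % ℓ = kap t₂ t₃ t₄ y % ℓ := congrArg Fin.val e3
  have e5 : kap t₂ t₃ t₄ y = (p 1).val + (p t₂).val + (p t₃).val + (p t₄).val := by
    show (y 1).val + (y t₂).val + (y t₃).val + (y t₄).val = _
    rw [hyval 1 m1, hyval t₂ m2, hyval t₃ m3, hyval t₄ m4]
  have e6 : kap t₂ t₃ t₄ (shiftAct γ y)
      = (p γ).val + (p (t₂ * γ)).val + (p (t₃ * γ)).val + (p (t₄ * γ)).val := by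
    show (y (1 * γ)).val + (y (t₂ * γ)).val + (y (t₃ * γ)).val + (y (t₄ * γ)).val = _
    rw [one_mul, hyval γ mγ, hyval (t₂ * γ) m2γ, hyval (t₃ * γ) m3γ, hyval (t₄ * γ) m4γ]
  rw [← e5, ← e6]
  exact e4

theorem main_sep (hpos : 0 < ℓ) (hℓ2 : 2 ≤ ℓ) (hF1 : (1 : Γ) ∉ F)
    (hFsym : ∀ σ ∈ F, σ⁻¹ ∈ F) (t₂ t₃ t₄ : Γ)
    (h2 : t₂ ≠ 1) (h3 : t₃ ≠ 1) (h4 : t₄ ≠ 1)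
    (h23 : t₂ ≠ t₃) (h24 : t₂ ≠ t₄) (h34 : t₃ ≠ t₄)
    (hA1 : t₄ ≠ t₃ * t₂⁻¹ * t₃) (hA2 : t₄ ≠ t₂ * t₃⁻¹ * t₂)
    (hB2 : t₄ ≠ t₂ * t₂) (hB3 : t₄ ≠ t₃ * t₂) (hB4 : t₄ ≠ t₂ * t₃)
    (hB5 : t₄ ≠ t₃ * t₃) (hB6 : t₄ ≠ t₂⁻¹ * t₃) (hB8 : t₄ ≠ t₃⁻¹ * t₂)
    {γ : Γ} (hγ : γ ≠ 1) (hγF : γ ∉ F)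
    (hkey : ∀ x ∈ freePart Γ (Fin 3),
      gg F hpos t₂ t₃ t₄ (shiftAct γ x) = gg F hpos t₂ t₃ t₄ x) : False := by
  classical
  obtain ⟨w, hw1, hwγ, hwXOR⟩ := exists_sep (t₂ := t₂) (t₃ := t₃) (t₄ := t₄) (γ := γ)
    hγ h2 h3 h4 h23 h24 h34 hA1 hA2 hB2 hB3 hB4 hB5 hB6 hB8
  set NF : Finset Γ := F ∪ F.image (fun σ => σ * γ) with hNF
  have hNF_ne1 : (1 : Γ) ∉ NF := by
    rw [hNF]
    simp only [Finset.mem_union, Finset.mem_image, not_or, not_exists]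
    refine ⟨hF1, ?_⟩
    intro σ hcontra
    apply hγF
    have hσF : σ ∈ F := hcontra.1
    have hγval : γ = σ⁻¹ := (inv_eq_of_mul_eq_one_right hcontra.2).symm
    rw [hγval]
    exact hFsym σ hσF
  have hNF_neγ : γ ∉ NF := by
    rw [hNF]
    simp only [Finset.mem_union, Finset.mem_image, not_or, not_exists]
    refine ⟨hγF, ?_⟩
    rintro σ ⟨hσF, hσγ⟩
    apply hF1
    have hσ1 : σ = 1 := by
      have : σ * γ = 1 * γ := by rw [one_mul]; exact hσγ
      exact mul_right_cancel this
    rwa [hσ1] at hσF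
  have hmemF : ∀ σ ∈ F, σ ∈ NF := fun σ hσ => Finset.mem_union_left _ hσ
  have hmemFγ : ∀ σ ∈ F, σ * γ ∈ NF := fun σ hσ =>
    Finset.mem_union_right _ (Finset.mem_image.2 ⟨σ, hσ, rfl⟩)
  set p₀ : Γ → Fin 3 :=
    (fun v => if v = 1 then 0 else if v = γ then 0 else if v ∈ NF then 1 else 0) with hp₀
  set nv : Fin 3 := if w ∈ NF then 2 else 1 with hnv
  set p₁ : Γ → Fin 3 := Function.update p₀ w nv with hp₁
  have hp₀1 : p₀ 1 = 0 := by rw [hp₀]; simp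
  have hp₀γ : p₀ γ = 0 := by rw [hp₀]; simp [hγ]
  have hp₀NF : ∀ v ∈ NF, p₀ v = 1 := by
    intro v hv
    have hv1 : v ≠ 1 := fun h => hNF_ne1 (h ▸ hv)
    have hvγ : v ≠ γ := fun h => hNF_neγ (h ▸ hv)
    rw [hp₀]
    simp only [if_neg hv1, if_neg hvγ, if_pos hv]
  have hsame : ∀ v : Γ, v ≠ w → p₁ v = p₀ v := by
    intro v hv
    rw [hp₁, Function.update_of_ne hv]
  have hp₁w : p₁ w = nv := by rw [hp₁, Function.update_self]
  have hval_w : (p₁ w).val = (p₀ w).val + 1 := by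
    rw [hp₁w, hnv]
    by_cases hwNF : w ∈ NF
    · rw [if_pos hwNF, hp₀NF w hwNF]
      rfl
    · rw [if_neg hwNF, hp₀]
      simp only [if_neg hw1, if_neg hwγ, if_neg hwNF]
      rfl
  have hp₁1 : p₁ 1 = 0 := by
    rw [hsame 1 (fun h => hw1 h.symm)]; exact hp₀1
  have hp₁γ : p₁ γ = 0 := by
    rw [hsame γ (fun h => hwγ h.symm)]; exact hp₀γ
  have hp₀F : ∀ σ ∈ F, p₀ σ ≠ 0 := by
    intro σ hσ
    rw [hp₀NF σ (hmemF σ hσ)]; decide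
  have hp₀Fγ : ∀ σ ∈ F, p₀ (σ * γ) ≠ 0 := by
    intro σ hσ
    rw [hp₀NF _ (hmemFγ σ hσ)]; decide
  have hp₁NF : ∀ v ∈ NF, p₁ v ≠ 0 := by
    intro v hv
    by_cases hvw : v = w
    · rw [hvw, hp₁w, hnv]
      rw [if_pos (hvw ▸ hv)]
      decide
    · rw [hsame v hvw, hp₀NF v hv]; decide
  have hp₁F : ∀ σ ∈ F, p₁ σ ≠ 0 := fun σ hσ => hp₁NF σ (hmemF σ hσ)
  have hp₁Fγ : ∀ σ ∈ F, p₁ (σ * γ) ≠ 0 := fun σ hσ => hp₁NF _ (hmemFγ σ hσ)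
  have E0 := config_mod F hpos t₂ t₃ t₄ hF1 hFsym hγ hγF w hkey p₀ hp₀1 hp₀γ hp₀F hp₀Fγ
  have E1 := config_mod F hpos t₂ t₃ t₄ hF1 hFsym hγ hγF w hkey p₁ hp₁1 hp₁γ hp₁F hp₁Fγ
  have hstep : ∀ n : ℕ, (n + 1) % ℓ ≠ n % ℓ := by
    intro n hmod
    have h' : n % ℓ = (n + 1) % ℓ := hmod.symm
    have hdvd : ℓ ∣ (n + 1) - n := (Nat.modEq_iff_dvd' (Nat.le_succ n)).mp h'
    simp only [Nat.add_sub_cancel_left] at hdvd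
    have h1 : ℓ ∣ 1 := by simpa using hdvd
    have := Nat.le_of_dvd Nat.one_pos h1
    omega
  by_cases hinT : w = 1 ∨ w = t₂ ∨ w = t₃ ∨ w = t₄
  · have hnotTγ : ¬(w = γ ∨ w = t₂ * γ ∨ w = t₃ * γ ∨ w = t₄ * γ) :=
      fun h => hwXOR (iff_of_true hinT h)
    push_neg at hnotTγ
    obtain ⟨q1, q2, q3, q4⟩ := hnotTγ
    have hB : (p₁ γ).val + (p₁ (t₂ * γ)).val + (p₁ (t₃ * γ)).val + (p₁ (t₄ * γ)).val
        = (p₀ γ).val + (p₀ (t₂ * γ)).val + (p₀ (t₃ * γ)).val + (p₀ (t₄ * γ)).val := by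
      rw [hsame γ (fun h => q1 h.symm), hsame (t₂ * γ) (fun h => q2 h.symm),
        hsame (t₃ * γ) (fun h => q3 h.symm), hsame (t₄ * γ) (fun h => q4 h.symm)]
    have hA : (p₁ 1).val + (p₁ t₂).val + (p₁ t₃).val + (p₁ t₄).val
        = ((p₀ 1).val + (p₀ t₂).val + (p₀ t₃).val + (p₀ t₄).val) + 1 := by
      rcases hinT with h | h | h | h
      · exact absurd h hw1
      · subst h
        rw [hsame 1 (fun hh => h2 hh.symm), hsame t₃ (fun hh => h23 hh.symm),
          hsame t₄ (fun hh => h24 hh.symm), hval_w]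
        omega
      · subst h
        rw [hsame 1 (fun hh => h3 hh.symm), hsame t₂ h23,
          hsame t₄ (fun hh => h34 hh.symm), hval_w]
        omega
      · subst h
        rw [hsame 1 (fun hh => h4 hh.symm), hsame t₂ h24, hsame t₃ h34, hval_w]
        omega
    rw [hA, hB] at E1
    rw [E0] at E1
    exact hstep _ E1.symm
  · have hinTγ : w = γ ∨ w = t₂ * γ ∨ w = t₃ * γ ∨ w = t₄ * γ := by
      by_contra hno
      exact hwXOR (iff_of_false hinT hno)
    push_neg at hinT
    obtain ⟨q1, q2, q3, q4⟩ := hinT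
    have hA : (p₁ 1).val + (p₁ t₂).val + (p₁ t₃).val + (p₁ t₄).val
        = (p₀ 1).val + (p₀ t₂).val + (p₀ t₃).val + (p₀ t₄).val := by
      rw [hsame 1 (fun h => q1 h.symm), hsame t₂ (fun h => q2 h.symm),
        hsame t₃ (fun h => q3 h.symm), hsame t₄ (fun h => q4 h.symm)]
    have hB : (p₁ γ).val + (p₁ (t₂ * γ)).val + (p₁ (t₃ * γ)).val + (p₁ (t₄ * γ)).val
        = ((p₀ γ).val + (p₀ (t₂ * γ)).val + (p₀ (t₃ * γ)).val + (p₀ (t₄ * γ)).val) + 1 := by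
      have hne23 : t₂ * γ ≠ t₃ * γ := fun h => h23 (mul_right_cancel h)
      have hne24 : t₂ * γ ≠ t₄ * γ := fun h => h24 (mul_right_cancel h)
      have hne34 : t₃ * γ ≠ t₄ * γ := fun h => h34 (mul_right_cancel h)
      have hne1γ : ∀ s : Γ, s ≠ 1 → γ ≠ s * γ := by
        intro s hs h
        apply hs
        have : s * γ = 1 * γ := by rw [one_mul, ← h]
        exact mul_right_cancel this
      rcases hinTγ with h | h | h | h
      · exact absurd h hwγ
      · subst h
        rw [hsame γ (hne1γ t₂ h2), hsame (t₃ * γ) hne23.symm,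
          hsame (t₄ * γ) hne24.symm, hval_w]
        omega
      · subst h
        rw [hsame γ (hne1γ t₃ h3), hsame (t₂ * γ) hne23,
          hsame (t₄ * γ) hne34.symm, hval_w]
        omega
      · subst h
        rw [hsame γ (hne1γ t₄ h4), hsame (t₂ * γ) hne24,
          hsame (t₃ * γ) hne34, hval_w]
        omega
    rw [hA, hB] at E1
    rw [← E0] at E1
    exact hstep _ E1

end Stmt6Aux

set_option maxHeartbeats 2000000 in
open Stmt6Aux in
/-- Let `F ⊂ Γ` be a nonempty finite symmetric set with `1 ∉ F`.
If `ℓ ≥ |F| + 1`, then there is a continuous `Γ`-equivariant map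
`π : Free(3^Γ) → Col(F, ℓ)` with `Stab(π) = {1}`. -/
theorem stmt6 {Γ : Type} [Group Γ] [Countable Γ] [Infinite Γ]
    (F : Finset Γ) (hFne : F.Nonempty) (hFsym : ∀ σ ∈ F, σ⁻¹ ∈ F) (hF1 : (1 : Γ) ∉ F)
    (ℓ : ℕ) (hℓ : F.card + 1 ≤ ℓ) :
    ∃ π : (Γ → Fin 3) → (Γ → Fin ℓ),
      ContinuousOn π (freePart Γ (Fin 3)) ∧
      EquivariantOn π (freePart Γ (Fin 3)) ∧
      (∀ x ∈ freePart Γ (Fin 3), π x ∈ properCol F ℓ) ∧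
      mapStab π (freePart Γ (Fin 3)) = {(1 : Γ)} := by
  classical
  have hcard : F.card < ℓ := hℓ
  have hpos : 0 < ℓ := lt_of_le_of_lt (Nat.zero_le _) hcard
  have hℓ2 : 2 ≤ ℓ := le_trans (by have := Finset.card_pos.2 hFne; omega) hℓ
  -- choose the window elements
  obtain ⟨t₂, ht₂⟩ := Infinite.exists_notMem_finset ({1} : Finset Γ)
  have h2 : t₂ ≠ 1 := by simpa using ht₂
  obtain ⟨t₃, ht₃⟩ := Infinite.exists_notMem_finset ({1, t₂} : Finset Γ)
  have h3 : t₃ ≠ 1 := by simp at ht₃; tauto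
  have h23 : t₂ ≠ t₃ := by simp at ht₃; tauto
  obtain ⟨t₄, ht₄⟩ := Infinite.exists_notMem_finset
    ({1, t₂, t₃, t₃ * t₂⁻¹ * t₃, t₂ * t₃⁻¹ * t₂, t₂ * t₂, t₃ * t₂, t₂ * t₃,
      t₃ * t₃, t₂⁻¹ * t₃, t₃⁻¹ * t₂} : Finset Γ)
  simp only [Finset.mem_insert, Finset.mem_singleton, not_or] at ht₄
  obtain ⟨h4, h24, h34, hA1, hA2, hB2, hB3, hB4, hB5, hB6, hB8⟩ := ht₄
  have h4 : t₄ ≠ 1 := h4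
  have h24 : t₂ ≠ t₄ := fun h => h24 h.symm
  have h34 : t₃ ≠ t₄ := fun h => h34 h.symm
  -- the coloring map
  set π : (Γ → Fin 3) → (Γ → Fin ℓ) :=
    fun x δ => gg F hpos t₂ t₃ t₄ (shiftAct δ x) with hπ
  refine ⟨π, ?_, ?_, ?_, ?_⟩
  · -- continuity
    intro x hx
    rw [continuousWithinAt_pi]
    intro δ
    obtain ⟨V, hV⟩ := gg_local F hpos hF1 t₂ t₃ t₄ (shiftAct δ x)
      (shift_mem_freePart hx δ)
    have hUopen : IsOpen (⋂ a ∈ V, {y : Γ → Fin 3 | y (a * δ) = x (a * δ)}) := by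
      apply isOpen_biInter_finset
      intro a _
      have : {y : Γ → Fin 3 | y (a * δ) = x (a * δ)}
          = (fun y : Γ → Fin 3 => y (a * δ)) ⁻¹' {x (a * δ)} := by
        ext y; simp
      rw [this]
      exact (continuous_apply (a * δ)).isOpen_preimage _ (isOpen_discrete _)
    have hxU : x ∈ ⋂ a ∈ V, {y : Γ → Fin 3 | y (a * δ) = x (a * δ)} := by
      simp
    have hev : ∀ᶠ y in nhdsWithin x (freePart Γ (Fin 3)),
        π y δ = π x δ := by
      filter_upwards [mem_nhdsWithin_of_mem_nhds (hUopen.mem_nhds hxU),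
        self_mem_nhdsWithin] with y hyU hyfree
      have hagree : ∀ a ∈ V, shiftAct δ y a = shiftAct δ x a := by
        intro a ha
        have := Set.mem_iInter₂.1 hyU a ha
        exact this
      exact hV (shiftAct δ y) (shift_mem_freePart hyfree δ) hagree
    exact Filter.Tendsto.congr' (hev.mono fun y hy => hy.symm) tendsto_const_nhds
  · -- equivariance
    intro x hx γ
    funext δ
    show gg F hpos t₂ t₃ t₄ (shiftAct δ (shiftAct γ x))
      = gg F hpos t₂ t₃ t₄ (shiftAct (δ * γ) x)
    rw [shiftAct_shiftAct]
  · -- proper coloring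
    intro x hx δ σ hσ
    show gg F hpos t₂ t₃ t₄ (shiftAct δ x) ≠ gg F hpos t₂ t₃ t₄ (shiftAct (σ * δ) x)
    rw [← shiftAct_shiftAct]
    exact (gg_proper F hpos hcard hF1 hFsym t₂ t₃ t₄ (shift_mem_freePart hx δ) hσ).symm
  · -- trivial stabilizer
    rw [Set.eq_singleton_iff_unique_mem]
    constructor
    · intro x _
      exact shiftAct_one (π x)
    · intro γ hmem
      by_contra hγ
      have hkey : ∀ x ∈ freePart Γ (Fin 3),
          gg F hpos t₂ t₃ t₄ (shiftAct γ x) = gg F hpos t₂ t₃ t₄ x := by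
        intro x hx
        have h := congrFun (hmem x hx) 1
        show _ = _
        have h1 : shiftAct γ (π x) 1 = gg F hpos t₂ t₃ t₄ (shiftAct γ x) := by
          show π x (1 * γ) = _
          rw [one_mul]
        have h2 : π x 1 = gg F hpos t₂ t₃ t₄ x := by
          show gg F hpos t₂ t₃ t₄ (shiftAct 1 x) = _
          rw [shiftAct_one]
        rw [← h1, ← h2, h]
      by_cases hγF : γ ∈ F
      · have hfree := extLimit_free (∅ : Finset Γ) (fun _ => 0)
        exact gg_proper F hpos hcard hF1 hFsym t₂ t₃ t₄ hfree hγF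
          (hkey _ hfree)
      · -- γ ∉ F ∪ {1} : build the two-minima configurations
        exact main_sep F hpos hℓ2 hF1 hFsym t₂ t₃ t₄ h2 h3 h4 h23 h24 h34
          hA1 hA2 hB2 hB3 hB4 hB5 hB6 hB8 hγ hγF hkey
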